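/- The Belyaev Lax representation: with Γ̂, M̂, L̂, χ̂, Ω̂ the (n+1)×(n+1) embeddings of Γ, χ ∈ ℝⁿ and M, L, Ω ∈ so(n), the coefficient of λ² in the Lax equation d/dt(Γ̂ + λ(M̂+L̂) + λ²(α₁+α₂)χ̂) = [Γ̂ + λ(M̂+L̂) + λ²(α₁+α₂)χ̂, Ω̂ + λχ̂] vanishes, given that M = JΩ + ΩJ with J = diag(α₁,…,α₁,α₂), χ = χₙEₙ, and [L̂, χ̂] = 0. -/

import Mathlib

open Matrix

/-- The embedding `so(n) → so(n+1)`, `ξ ↦ ξ̂`, extending by a zero last row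
and column. -/
def hatSo {n : ℕ} (ξ : Matrix (Fin n) (Fin n) ℝ) :
    Matrix (Fin (n + 1)) (Fin (n + 1)) ℝ :=
  Matrix.of fun i j =>
    if h : (i : ℕ) < n ∧ (j : ℕ) < n then ξ ⟨i, h.1⟩ ⟨j, h.2⟩ else 0

/-- The embedding `ℝⁿ → so(n+1)`, `η ↦ η̂`, with last column `η`, last row
`-ηᵀ` and upper-left block zero. -/
def hatVec {n : ℕ} (η : Fin n → ℝ) :
    Matrix (Fin (n + 1)) (Fin (n + 1)) ℝ :=
  Matrix.of fun i j =>
    if hi : (i : ℕ) < n then (if (j : ℕ) = n then η ⟨i, hi⟩ else 0)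
    else if hj : (j : ℕ) < n then -η ⟨j, hj⟩ else 0


lemma hatVec_smul {n : ℕ} (a : ℝ) (v : Fin n → ℝ) :
    hatVec (a • v) = a • hatVec v := by
  ext i j
  simp only [hatVec, of_apply, Matrix.smul_apply, Pi.smul_apply, smul_eq_mul]
  split_ifs <;> simp

lemma comm_hat {n : ℕ} (X : Matrix (Fin n) (Fin n) ℝ) (hX : Xᵀ = -X) (v : Fin n → ℝ) :
    hatSo X * hatVec v - hatVec v * hatSo X = hatVec (X.mulVec v) := by
  have hskew : ∀ i j, X j i = -X i j := by
    intro i j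
    have := congrFun (congrFun hX i) j
    simpa [Matrix.transpose_apply] using this
  ext i j
  simp only [Matrix.sub_apply, mul_apply, hatSo, hatVec, of_apply, mulVec, dotProduct]
  rw [Fin.sum_univ_castSucc, Fin.sum_univ_castSucc]
  by_cases hi : (i : ℕ) < n <;> by_cases hj : (j : ℕ) < n
  · -- i<n, j<n : both sides 0
    have hjn : ¬ ((j : ℕ) = n) := by omega
    simp only [hi, hj, hjn, dif_pos, if_false, and_true, and_self, Fin.coe_castSucc,
      Fin.val_last, Fin.is_lt, dite_true, lt_irrefl, dite_false, and_false, mul_zero,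
      Finset.sum_const_zero, add_zero, zero_add, zero_mul, if_neg]
    rw [Finset.sum_eq_zero (fun (x : Fin n) _ => by
      rw [if_neg (Nat.ne_of_lt x.isLt), zero_mul]), sub_zero]
  · -- i<n, j=n
    have hjn : (j : ℕ) = n := by omega
    simp [hi, hj, hjn, Fin.is_lt]
  · -- i=n, j<n
    have hin : (i : ℕ) = n := by omega
    simp [hi, hj, hin, Fin.is_lt, Finset.sum_neg_distrib]
    rw [← Finset.sum_neg_distrib]
    congr 1; ext k
    rw [hskew]
    ring
  · have hin : (i : ℕ) = n := by omega
    simp [hi, hj, hin]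

/-- The Belyaev Lax representation: the coefficient of `λ²` in the Lax
equation `d/dt (Γ̂ + λ(M̂+L̂) + λ²(α₁+α₂)χ̂) = [Γ̂ + λ(M̂+L̂) + λ²(α₁+α₂)χ̂,
Ω̂ + λχ̂]` vanishes, i.e. `(α₁+α₂)[χ̂, Ω̂] + [M̂+L̂, χ̂] = 0`, given
`M = JΩ + ΩJ` with `J = diag(α₁,…,α₁,α₂)`, `χ = χₙEₙ` and `[L̂, χ̂] = 0`. -/
theorem stmt_16 {n : ℕ} (hn : 1 ≤ n) (a1 a2 chin : ℝ)
    (J M Om L : Matrix (Fin n) (Fin n) ℝ) (chi : Fin n → ℝ)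
    (hJ : J = Matrix.diagonal (fun i : Fin n => if (i : ℕ) < n - 1 then a1 else a2))
    (hchi : chi = fun i : Fin n => if (i : ℕ) = n - 1 then chin else 0)
    (hOm : Omᵀ = -Om) (hL : Lᵀ = -L)
    (hM : M = J * Om + Om * J)
    (hLchi : hatSo L * hatVec chi - hatVec chi * hatSo L = 0) :
    (a1 + a2) • (hatVec chi * hatSo Om - hatSo Om * hatVec chi)
      + ((hatSo M + hatSo L) * hatVec chi
          - hatVec chi * (hatSo M + hatSo L)) = 0 := by
  have hMskew : Mᵀ = -M := by
    rw [hM, Matrix.transpose_add, Matrix.transpose_mul, Matrix.transpose_mul, hOm]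
    have hJt : Jᵀ = J := by rw [hJ, Matrix.diagonal_transpose]
    rw [hJt]
    noncomm_ring
  have hOmskew : ∀ i j, Om j i = -Om i j := by
    intro i j
    simpa [Matrix.transpose_apply] using congrFun (congrFun hOm i) j
  have hkey : M.mulVec chi = (a1 + a2) • Om.mulVec chi := by
    have hdiag : ∀ i : Fin n, Om.mulVec chi i = Om i ⟨n - 1, by omega⟩ * chin := by
      intro i
      simp only [hchi, Matrix.mulVec, dotProduct]
      rw [Finset.sum_eq_single (⟨n - 1, by omega⟩ : Fin n)]
      · simp
      · intro b _ hb
        have hbne : (b : ℕ) ≠ n - 1 := fun h => hb (by ext; simp [h])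
        simp [hbne]
      · simp
    have hz : Om.mulVec chi ⟨n - 1, by omega⟩ = 0 := by
      rw [hdiag]
      have := hOmskew ⟨n - 1, by omega⟩ ⟨n - 1, by omega⟩
      have : Om ⟨n - 1, by omega⟩ ⟨n - 1, by omega⟩ = 0 := by linarith
      rw [this]; ring
    have hJchi : J.mulVec chi = a2 • chi := by
      funext i
      simp only [hJ, hchi, Matrix.mulVec_diagonal, Pi.smul_apply, smul_eq_mul]
      by_cases hie : (i : ℕ) = n - 1
      · have : ¬ ((i : ℕ) < n - 1) := by omega
        simp [hie, this, mul_comm]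
      · simp [hie]
    have hJOm : J.mulVec (Om.mulVec chi) = a1 • Om.mulVec chi := by
      funext i
      simp only [hJ, Matrix.mulVec_diagonal, Pi.smul_apply, smul_eq_mul]
      by_cases hi : (i : ℕ) < n - 1
      · simp [hi]
      · have hieq : i = (⟨n - 1, by omega⟩ : Fin n) := by ext; simp; omega
        rw [hieq, hz]
        simp
    rw [hM, Matrix.add_mulVec, ← Matrix.mulVec_mulVec, ← Matrix.mulVec_mulVec,
      hJchi, hJOm, Matrix.mulVec_smul, add_smul]
  have c1 := comm_hat Om hOm chi
  have c2 := comm_hat M hMskew chi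
  have e1 : hatVec chi * hatSo Om - hatSo Om * hatVec chi = -hatVec (Om.mulVec chi) := by
    rw [← c1]; abel
  have e2 : (hatSo M + hatSo L) * hatVec chi - hatVec chi * (hatSo M + hatSo L)
      = hatVec (M.mulVec chi) := by
    rw [add_mul, mul_add, ← c2]
    have hc : hatSo L * hatVec chi = hatVec chi * hatSo L := sub_eq_zero.mp hLchi
    rw [hc]; abel
  rw [e1, e2, hkey, hatVec_smul]
  simp
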